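/- Locality of the Average Forest measure: for an arc (i₀,j₀) of Γ and a node k whose local digraph is unchanged by removing (i₀,j₀) — i.e., Γ(k) = Γ'(k) where Γ' = Γ−(i₀,j₀) — one has AF_k(N,v,Γ) = AF_k(N,v,Γ'). Here the local digraph Γ(k) has node set S̄_Γ(k) ∪ P̂_Γ(S_Γ(k)) and arc set consisting of the arcs of Γ among S̄_Γ(k) together with all arcs (i,j) of Γ with i an immediate predecessor of some successor of k and j ∈ S_Γ(k). -/

import Mathlib

open scoped Classical
open Finset

section Preamble

variable {V : Type*} [Fintype V] [DecidableEq V]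

/-- Adjacency relation of a digraph given by its arc set. -/
def Adj (A : Finset (V × V)) (i j : V) : Prop := (i, j) ∈ A

/-- A digraph is circuit-free if it contains no directed cycle. -/
def CircuitFree (A : Finset (V × V)) : Prop :=
  ∀ i : V, ¬ Relation.TransGen (Adj A) i i

/-- In-degree of a node. -/
def inDeg (A : Finset (V × V)) (j : V) : ℕ :=
  (A.filter (fun a => a.2 = j)).card

/-- Weak connectivity (chains, ignoring orientation). -/
def WConn (A : Finset (V × V)) (i j : V) : Prop :=
  Relation.ReflTransGen (fun a b => (a, b) ∈ A ∨ (b, a) ∈ A) i j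

/-- The weakly connected component of `i`, as a finset. -/
noncomputable def compF (A : Finset (V × V)) (i : V) : Finset V :=
  Finset.univ.filter (fun j => WConn A i j)

/-- `IsPath A p` : `p` is a (nonempty) directed path along arcs of `A`. -/
def IsPath (A : Finset (V × V)) : List V → Prop
  | [] => False
  | [_] => True
  | i :: j :: l => (i, j) ∈ A ∧ IsPath A (j :: l)

/-- The digraph `A` restricted to the node set `K` is an arborescence:
there is a root `r ∈ K` with a unique directed path from `r` to every node of `K`. -/
def IsArbOn (A : Finset (V × V)) (K : Set V) : Prop :=
  ∃ r ∈ K, ∀ i ∈ K, ∃! p : List V,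
    IsPath A p ∧ p.head? = some r ∧ p.getLast? = some i

/-- A forest: every weakly connected component is an arborescence. -/
def IsForest (A : Finset (V × V)) : Prop :=
  ∀ i : V, IsArbOn A {j | WConn A i j}

/-- `F` is a maximal spanning forest of the digraph `A`. -/
def IsMaxSpanningForest (A F : Finset (V × V)) : Prop :=
  F ⊆ A ∧ IsForest F ∧ ∀ a ∈ A, a ∉ F → ¬ IsForest (insert a F)

/-- The collection of all maximal spanning forests of `A`. -/
noncomputable def maxForests (A : Finset (V × V)) : Finset (Finset (V × V)) :=
  A.powerset.filter (fun F => IsMaxSpanningForest A F)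

/-- `S̄_F(i)` : the node `i` together with all its successors in `F`. -/
noncomputable def succSet (F : Finset (V × V)) (i : V) : Finset V :=
  Finset.univ.filter (fun j => Relation.ReflTransGen (Adj F) i j)

/-- `Ŝ_F(i)` : the immediate successors of `i` in `F`. -/
noncomputable def immSucc (F : Finset (V × V)) (i : V) : Finset V :=
  Finset.univ.filter (fun j => (i, j) ∈ F)

/-- Marginal contribution of player `i` with respect to the forest `F`. -/
noncomputable def marg (v : Finset V → ℝ) (F : Finset (V × V)) (i : V) : ℝ :=
  v (succSet F i) - ∑ j ∈ immSucc F i, v (succSet F j)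

/-- The Average Forest leadership measure. -/
noncomputable def AF (v : Finset V → ℝ) (A : Finset (V × V)) (i : V) : ℝ :=
  (∑ F ∈ maxForests A, marg v F i) / (maxForests A).card

/-- The node sets of the arborescence components of a forest `F`. -/
noncomputable def comps (F : Finset (V × V)) : Finset (Finset V) :=
  Finset.univ.image (fun i => compF F i)

/-- Productivity of the organisational situation. -/
noncomputable def Productivity (v : Finset V → ℝ) (A : Finset (V × V)) : ℝ :=
  (∑ F ∈ maxForests A, ∑ K ∈ comps F, v K) / (maxForests A).card

/-- Superadditivity of a TU game. -/
def Superadditive (v : Finset V → ℝ) : Prop :=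
  ∀ S Q : Finset V, Disjoint S Q → v S + v Q ≤ v (S ∪ Q)

/-- Weak connectedness of the digraph. -/
def WeaklyConnected (A : Finset (V × V)) : Prop :=
  ∀ i j : V, WConn A i j

/-- Quasi-strong connectedness: existence of a root reaching every node. -/
def HasRoot (A : Finset (V × V)) : Prop :=
  ∃ r : V, ∀ i : V, Relation.ReflTransGen (Adj A) r i

end Preamble
/-- The strict successors of `k`. -/
noncomputable def succS {V : Type*} [Fintype V] [DecidableEq V]
    (A : Finset (V × V)) (k : V) : Finset V :=
  Finset.univ.filter (fun j => Relation.TransGen (Adj A) k j)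

/-- Node set of the local digraph `Γ(k)` : `k` together with its successors and with all
immediate predecessors of its successors. -/
noncomputable def localNodes {V : Type*} [Fintype V] [DecidableEq V]
    (A : Finset (V × V)) (k : V) : Finset V :=
  insert k (succS A k) ∪ Finset.univ.filter (fun i => ∃ j ∈ succS A k, (i, j) ∈ A)

/-- Arc set of the local digraph `Γ(k)` : arcs among `S̄_Γ(k)` together with all arcs
`(i, j)` with `j` a successor of `k` (so `i` is an immediate predecessor of a successor
of `k`). -/
noncomputable def localArcs {V : Type*} [Fintype V] [DecidableEq V]
    (A : Finset (V × V)) (k : V) : Finset (V × V) :=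
  A.filter (fun a =>
    (a.1 ∈ insert k (succS A k) ∧ a.2 ∈ insert k (succS A k)) ∨ a.2 ∈ succS A k)
section Lemmas
set_option linter.unusedSectionVars false

variable {V : Type*} [Fintype V] [DecidableEq V]

lemma isPath_iff_chain' (F : Finset (V × V)) :
    ∀ p : List V, IsPath F p ↔ p ≠ [] ∧ List.Chain' (Adj F) p
  | [] => by simp [IsPath]
  | [x] => by simp [IsPath, List.Chain']
  | x :: y :: l => by
    rw [IsPath, isPath_iff_chain' F (y :: l), List.Chain', List.Chain', List.isChain_cons_cons]
    simp [Adj, and_assoc]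

lemma circuitFree_subset {A F : Finset (V × V)} (h : CircuitFree A) (hFA : F ⊆ A) :
    CircuitFree F :=
  fun i hi => h i (Relation.TransGen.mono (fun a b hab => hFA hab) _ _ hi)

lemma wf_adj {F : Finset (V × V)} (h : CircuitFree F) : WellFounded (Adj F) := by
  haveI : IsIrrefl V (Relation.TransGen (Adj F)) := ⟨h⟩
  haveI : IsTrans V (Relation.TransGen (Adj F)) := ⟨fun _ _ _ => Relation.TransGen.trans⟩
  exact Subrelation.wf (fun {a b} h' => Relation.TransGen.single h')
    (Finite.wellFounded_of_trans_of_irrefl _)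

lemma parent_unique {F : Finset (V × V)} (hd : ∀ j, inDeg F j ≤ 1) {a b j : V}
    (ha : (a, j) ∈ F) (hb : (b, j) ∈ F) : a = b := by
  have h := Finset.card_le_one.mp (hd j) (a, j) (by simp [ha]) (b, j) (by simp [hb])
  exact congrArg Prod.fst h

/-- chain from a to last gives ReflTransGen -/
lemma chain'_reflTransGen {R : V → V → Prop} :
    ∀ (l : List V) (a b : V), List.Chain' R (a :: l) → (a :: l).getLast? = some b →
      Relation.ReflTransGen R a b
  | [], a, b, _, hl => by
    simp only [List.getLast?_singleton, Option.some.injEq] at hl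
    subst hl; exact Relation.ReflTransGen.refl
  | c :: l, a, b, hc, hl => by
    rw [List.Chain', List.isChain_cons_cons] at hc
    have hl' : (c :: l).getLast? = some b := by
      rw [← hl]; rfl
    exact Relation.ReflTransGen.head hc.1 (chain'_reflTransGen l c b hc.2 hl')

lemma chain'_transGen {R : V → V → Prop} {l : List V} {a b : V}
    (hc : List.Chain' R (a :: l)) (hne : l ≠ []) (hl : (a :: l).getLast? = some b) :
    Relation.TransGen R a b := by
  cases l with
  | nil => exact absurd rfl hne
  | cons c l =>
    rw [List.Chain', List.isChain_cons_cons] at hc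
    exact Relation.TransGen.head' hc.1 (chain'_reflTransGen l c b hc.2 (by rw [← hl]; rfl))

/-- decomposition of a path from the end -/
lemma path_decomp {F : Finset (V × V)} {p : List V} {r j : V}
    (hc : List.Chain' (Adj F) p) (hh : p.head? = some r) (hl : p.getLast? = some j) :
    (p = [r] ∧ r = j) ∨
      ∃ q x, p = q ++ [j] ∧ List.Chain' (Adj F) q ∧ q.head? = some r ∧
        q.getLast? = some x ∧ (x, j) ∈ F := by
  rcases List.eq_nil_or_concat p with rfl | ⟨q, y, rfl⟩
  · simp at hh
  · rw [List.concat_eq_append] at hc hh hl ⊢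
    have hy : y = j := by
      rw [List.getLast?_concat] at hl; exact Option.some_injective _ hl
    subst hy
    rcases List.eq_nil_or_concat q with rfl | hq
    · left
      simp only [List.nil_append, List.head?_cons, Option.some.injEq] at hh
      subst hh
      exact ⟨rfl, rfl⟩
    · have hqne : q ≠ [] := by rcases hq with ⟨L, b, rfl⟩; simp
      right
      rw [List.Chain', List.isChain_append] at hc
      obtain ⟨x, hx⟩ := List.getLast?_isSome.mpr hqne |> Option.isSome_iff_exists.mp
      refine ⟨q, x, rfl, hc.1, ?_, hx, ?_⟩
      · rw [List.head?_append_of_ne_nil _ hqne] at hh; exact hh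
      · exact hc.2.2 x hx y rfl

end Lemmas
section Lemmas2
set_option linter.unusedSectionVars false
set_option linter.unusedVariables false
variable {V : Type*} [Fintype V] [DecidableEq V]

lemma chain'_snoc {R : V → V → Prop} {p : List V} {x j : V} (hcp : List.Chain' R p)
    (hlp : p.getLast? = some x) (hxj : R x j) : List.Chain' R (p ++ [j]) := by
  rw [List.Chain', List.isChain_append]
  refine ⟨hcp, by simp, ?_⟩
  intro a ha b hb
  rw [hlp] at ha
  obtain rfl : x = a := by simpa using ha
  obtain rfl : j = b := by simpa using hb
  exact hxj

lemma chain'_RTG {R : V → V → Prop} {p : List V} {a b : V} (hc : List.Chain' R p)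
    (hh : p.head? = some a) (hl : p.getLast? = some b) : Relation.ReflTransGen R a b := by
  cases p with
  | nil => simp at hh
  | cons s l =>
    obtain rfl : s = a := by simpa using hh
    exact chain'_reflTransGen l _ b hc hl

lemma path_unique {F : Finset (V × V)} (hc : CircuitFree F) (hd : ∀ j, inDeg F j ≤ 1)
    (r : V) : ∀ j p q, List.Chain' (Adj F) p → p.head? = some r → p.getLast? = some j →
      List.Chain' (Adj F) q → q.head? = some r → q.getLast? = some j → p = q := by
  intro j
  induction j using (wf_adj hc).induction with
  | _ j ih =>
    intro p q hcp hhp hlp hcq hhq hlq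
    rcases path_decomp hcp hhp hlp with ⟨rfl, rfl⟩ | ⟨p₁, x, rfl, hcp₁, hhp₁, hlp₁, hxp⟩
    · rcases path_decomp hcq hhq hlq with ⟨rfl, _⟩ | ⟨q₁, y, rfl, hcq₁, hhq₁, hlq₁, hyq⟩
      · rfl
      · exact absurd (Relation.TransGen.tail' (chain'_RTG hcq₁ hhq₁ hlq₁) hyq) (hc r)
    · rcases path_decomp hcq hhq hlq with ⟨rfl, rfl⟩ | ⟨q₁, y, rfl, hcq₁, hhq₁, hlq₁, hyq⟩
      · exact absurd (Relation.TransGen.tail' (chain'_RTG hcp₁ hhp₁ hlp₁) hxp) (hc r)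
      · have hxy : x = y := parent_unique hd hxp hyq
        subst hxy
        rw [ih x hxp p₁ q₁ hcp₁ hhp₁ hlp₁ hcq₁ hhq₁ hlq₁]

lemma root_unique {F : Finset (V × V)} (hc : CircuitFree F) (hd : ∀ j, inDeg F j ≤ 1) :
    ∀ j r r' p p', (∀ x, (x, r) ∉ F) → (∀ x, (x, r') ∉ F) →
      List.Chain' (Adj F) p → p.head? = some r → p.getLast? = some j →
      List.Chain' (Adj F) p' → p'.head? = some r' → p'.getLast? = some j → r = r' := by
  intro j
  induction j using (wf_adj hc).induction with
  | _ j ih =>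
    intro r r' p p' hr hr' hcp hhp hlp hcp' hhp' hlp'
    rcases path_decomp hcp hhp hlp with ⟨rfl, rfl⟩ | ⟨p₁, x, rfl, hcp₁, hhp₁, hlp₁, hxp⟩
    · rcases path_decomp hcp' hhp' hlp' with ⟨rfl, rfl⟩ | ⟨q₁, y, rfl, _, _, _, hyq⟩
      · rfl
      · exact absurd hyq (hr y)
    · rcases path_decomp hcp' hhp' hlp' with ⟨rfl, rfl⟩ | ⟨q₁, y, rfl, hcq₁, hhq₁, hlq₁, hyq⟩
      · exact absurd hxp (hr' x)
      · have hxy : x = y := parent_unique hd hxp hyq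
        subst hxy
        exact ih x hxp r r' p₁ q₁ hr hr' hcp₁ hhp₁ hlp₁ hcq₁ hhq₁ hlq₁

lemma exists_root_path {F : Finset (V × V)} (hc : CircuitFree F) :
    ∀ j, ∃ r p, (∀ x, (x, r) ∉ F) ∧ List.Chain' (Adj F) p ∧ p.head? = some r ∧
      p.getLast? = some j := by
  intro j
  induction j using (wf_adj hc).induction with
  | _ j ih =>
    by_cases hj : ∃ x, (x, j) ∈ F
    · obtain ⟨x, hx⟩ := hj
      obtain ⟨r, p, hr, hcp, hhp, hlp⟩ := ih x hx
      have hpne : p ≠ [] := by rintro rfl; simp at hhp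
      exact ⟨r, p ++ [j], hr, chain'_snoc hcp hlp hx, by
        rw [List.head?_append_of_ne_nil _ hpne]; exact hhp, by simp⟩
    · push_neg at hj
      exact ⟨j, [j], hj, by simp [List.Chain'], rfl, rfl⟩

lemma wconn_symm {F : Finset (V × V)} {a b : V} (h : WConn F a b) : WConn F b a :=
  (@Relation.ReflTransGen.stdSymm _ _ ⟨fun x y hxy => hxy.symm⟩).symm _ _ h

lemma wconn_of_reach {F : Finset (V × V)} {a b : V}
    (h : Relation.ReflTransGen (Adj F) a b) : WConn F a b :=
  Relation.ReflTransGen.mono (fun x y hxy => Or.inl hxy) _ _ h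

lemma root_reaches {F : Finset (V × V)} (hd : ∀ j, inDeg F j ≤ 1) {c j : V}
    (h : WConn F c j) :
    ∀ r p, (∀ x, (x, r) ∉ F) → List.Chain' (Adj F) p → p.head? = some r →
      p.getLast? = some c →
      ∃ q, List.Chain' (Adj F) q ∧ q.head? = some r ∧ q.getLast? = some j := by
  induction h with
  | refl => exact fun r p _ hcp hhp hlp => ⟨p, hcp, hhp, hlp⟩
  | @tail b d hcb hstep ih =>
    intro r p hr hcp hhp hlp
    obtain ⟨q, hcq, hhq, hlq⟩ := ih r p hr hcp hhp hlp
    have hqne : q ≠ [] := by rintro rfl; simp at hhq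
    rcases hstep with hbd | hdb
    · exact ⟨q ++ [d], chain'_snoc hcq hlq hbd, by
        rw [List.head?_append_of_ne_nil _ hqne]; exact hhq, by simp⟩
    · rcases path_decomp hcq hhq hlq with ⟨rfl, rfl⟩ | ⟨q₁, x, rfl, hcq₁, hhq₁, hlq₁, hxq⟩
      · exact absurd hdb (hr d)
      · have : x = d := parent_unique hd hxq hdb
        subst this
        exact ⟨q₁, hcq₁, hhq₁, hlq₁⟩

end Lemmas2
section Lemmas3
set_option linter.unusedSectionVars false
set_option linter.unusedVariables false
variable {V : Type*} [Fintype V] [DecidableEq V]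

lemma isForest_of {F : Finset (V × V)} (hc : CircuitFree F) (hd : ∀ j, inDeg F j ≤ 1) :
    IsForest F := by
  intro i
  obtain ⟨r, p, hr, hcp, hhp, hlp⟩ := exists_root_path hc i
  have hri : WConn F i r := wconn_symm (wconn_of_reach (chain'_RTG hcp hhp hlp))
  refine ⟨r, hri, ?_⟩
  intro j hj
  have hj' : WConn F i j := hj
  obtain ⟨q, hcq, hhq, hlq⟩ := root_reaches hd hj' r p hr hcp hhp hlp
  refine ⟨q, ⟨(isPath_iff_chain' F q).mpr ⟨?_, hcq⟩, hhq, hlq⟩, ?_⟩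
  · rintro rfl; simp at hhq
  · rintro q' ⟨hq'path, hq'h, hq'l⟩
    exact path_unique hc hd r j q' q ((isPath_iff_chain' F q').mp hq'path).2 hq'h hq'l
      hcq hhq hlq

lemma deg_le_one_of_forest {F : Finset (V × V)} (h : IsForest F) (j : V) :
    inDeg F j ≤ 1 := by
  rw [inDeg, Finset.card_le_one]
  rintro ⟨a, j1⟩ ha ⟨b, j2⟩ hb
  simp only [Finset.mem_filter] at ha hb
  obtain ⟨haF, h1⟩ := ha
  obtain ⟨hbF, h2⟩ := hb
  have h1' : j = j1 := h1.symm
  have h2' : j = j2 := h2.symm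
  subst h1'
  subst h2'
  obtain ⟨r, hrK, hU⟩ := h j
  have haK : WConn F j a := Relation.ReflTransGen.single (Or.inr haF)
  have hbK : WConn F j b := Relation.ReflTransGen.single (Or.inr hbF)
  obtain ⟨pa, ⟨hpa, hha, hla⟩, -⟩ := hU a haK
  obtain ⟨pb, ⟨hpb, hhb, hlb⟩, -⟩ := hU b hbK
  have hcpa := ((isPath_iff_chain' F pa).mp hpa)
  have hcpb := ((isPath_iff_chain' F pb).mp hpb)
  obtain ⟨pj, hpj, huniq⟩ := hU j Relation.ReflTransGen.refl
  have e1 : pa ++ [j] = pj := by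
    refine huniq _ ⟨(isPath_iff_chain' F _).mpr ⟨by simp, chain'_snoc hcpa.2 hla haF⟩, ?_, by simp⟩
    rw [List.head?_append_of_ne_nil _ hcpa.1]; exact hha
  have e2 : pb ++ [j] = pj := by
    refine huniq _ ⟨(isPath_iff_chain' F _).mpr ⟨by simp, chain'_snoc hcpb.2 hlb hbF⟩, ?_, by simp⟩
    rw [List.head?_append_of_ne_nil _ hcpb.1]; exact hhb
  have hab : pa = pb := List.append_cancel_right (e1.trans e2.symm)
  have : some a = some b := by rw [← hla, hab, hlb]
  simp only [Option.some.injEq] at this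
  rw [this]

lemma inDeg_pos_iff {F : Finset (V × V)} {j : V} : 1 ≤ inDeg F j ↔ ∃ x, (x, j) ∈ F := by
  unfold inDeg
  rw [Nat.one_le_iff_ne_zero, ← Nat.pos_iff_ne_zero, Finset.card_pos,
    Finset.filter_nonempty_iff]
  constructor
  · rintro ⟨⟨x, y⟩, hmem, rfl⟩; exact ⟨x, hmem⟩
  · rintro ⟨x, hx⟩; exact ⟨(x, j), hx, rfl⟩

lemma inDeg_insert {F : Finset (V × V)} {e : V × V} (he : e ∉ F) (j : V) :
    inDeg (insert e F) j = (if e.2 = j then 1 else 0) + inDeg F j := by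
  unfold inDeg
  rw [Finset.filter_insert]
  split_ifs with h
  · rw [Finset.card_insert_of_notMem (fun hmem => he (Finset.mem_filter.mp hmem).1)]
    omega
  · simp

lemma inDeg_erase {A : Finset (V × V)} {e : V × V} (he : e ∈ A) (j : V) :
    inDeg (A.erase e) j = inDeg A j - (if e.2 = j then 1 else 0) := by
  unfold inDeg
  rw [Finset.filter_erase]
  split_ifs with h
  · rw [Finset.card_erase_of_mem (Finset.mem_filter.mpr ⟨he, h⟩)]
  · rw [Finset.erase_eq_of_notMem
      (a := e) (s := Finset.filter (fun a => a.2 = j) A)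
      (fun hmem => h (Finset.mem_filter.mp hmem).2), Nat.sub_zero]

def MF (A F : Finset (V × V)) : Prop :=
  F ⊆ A ∧ ∀ j : V, inDeg F j ≤ 1 ∧ (1 ≤ inDeg A j → 1 ≤ inDeg F j)

lemma mem_maxForests_iff {A F : Finset (V × V)} (hA : CircuitFree A) :
    F ∈ maxForests A ↔ MF A F := by
  rw [maxForests, Finset.mem_filter, Finset.mem_powerset, IsMaxSpanningForest]
  constructor
  · rintro ⟨hFA, -, hForest, hMax⟩
    refine ⟨hFA, fun j => ⟨deg_le_one_of_forest hForest j, ?_⟩⟩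
    intro hAj
    by_contra h0
    push_neg at h0
    have h00 : inDeg F j = 0 := by omega
    obtain ⟨x, hx⟩ := inDeg_pos_iff.mp hAj
    have hxF : (x, j) ∉ F := fun hmem => by
      have := inDeg_pos_iff.mpr ⟨x, hmem⟩; omega
    apply hMax (x, j) hx hxF
    apply isForest_of (circuitFree_subset hA (Finset.insert_subset hx hFA))
    intro j'
    rw [inDeg_insert hxF j']
    rcases em (j = j') with rfl | hne
    · rw [if_pos rfl]; omega
    · have := deg_le_one_of_forest hForest j'
      rw [if_neg (by simpa using hne)]; omega
  · rintro ⟨hFA, hdeg⟩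
    have hcF := circuitFree_subset hA hFA
    refine ⟨hFA, hFA, isForest_of hcF (fun j => (hdeg j).1), ?_⟩
    rintro ⟨x, y⟩ hxyA hxyF hbad
    have h1 : 1 ≤ inDeg F y := (hdeg y).2 (inDeg_pos_iff.mpr ⟨x, hxyA⟩)
    have h2 := deg_le_one_of_forest hbad y
    rw [inDeg_insert hxyF y] at h2
    rw [if_pos rfl] at h2
    omega

end Lemmas3
section Lemmas4
set_option linter.unusedSectionVars false
set_option linter.unusedVariables false
variable {V : Type*} [Fintype V] [DecidableEq V]

lemma inDeg_mono {F X : Finset (V × V)} (h : F ⊆ X) (j : V) : inDeg F j ≤ inDeg X j :=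
  Finset.card_le_card (Finset.filter_subset_filter _ h)

lemma inDeg_filter_ne (F : Finset (V × V)) (j₀ j : V) :
    inDeg (F.filter (fun a => a.2 ≠ j₀)) j = if j = j₀ then 0 else inDeg F j := by
  unfold inDeg
  rw [Finset.filter_filter]
  split_ifs with h
  · subst h
    rw [Finset.card_eq_zero, Finset.filter_eq_empty_iff]
    rintro a ha ⟨h1, h2⟩
    exact h1 h2
  · congr 1
    apply Finset.filter_congr
    intro a ha
    constructor
    · rintro ⟨-, h2⟩; exact h2
    · intro h2; exact ⟨fun hc => h (h2 ▸ hc), h2⟩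

lemma reach_eq {A F G : Finset (V × V)} (hF : F ⊆ A) (hG : G ⊆ A) {k j₀ : V}
    (hj₀ : j₀ ∉ succS A k)
    (hFG : F.filter (fun a => a.2 ≠ j₀) = G.filter (fun a => a.2 ≠ j₀))
    {x : V} (hkx : Relation.ReflTransGen (Adj A) k x) :
    ∀ {y}, Relation.ReflTransGen (Adj F) x y → Relation.ReflTransGen (Adj G) x y := by
  intro y h
  induction h with
  | refl => exact .refl
  | @tail b d hxb hbd ih =>
    have hkb : Relation.ReflTransGen (Adj A) k b :=
      hkx.trans (Relation.ReflTransGen.mono (fun a b hab => hF hab) _ _ hxb)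
    have hd : d ∈ succS A k := by
      rw [succS, Finset.mem_filter]
      exact ⟨Finset.mem_univ _, Relation.TransGen.tail' hkb (hF hbd)⟩
    have hdj : d ≠ j₀ := fun h => hj₀ (h ▸ hd)
    have hbdG : (b, d) ∈ G := by
      have h1 : (b, d) ∈ F.filter (fun a => a.2 ≠ j₀) := Finset.mem_filter.mpr ⟨hbd, hdj⟩
      rw [hFG] at h1
      exact (Finset.mem_filter.mp h1).1
    exact ih.tail hbdG

lemma succSet_eq {A F G : Finset (V × V)} (hF : F ⊆ A) (hG : G ⊆ A) {k j₀ : V}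
    (hj₀ : j₀ ∉ succS A k)
    (hFG : F.filter (fun a => a.2 ≠ j₀) = G.filter (fun a => a.2 ≠ j₀))
    {x : V} (hkx : Relation.ReflTransGen (Adj A) k x) :
    succSet F x = succSet G x := by
  ext y
  simp only [succSet, Finset.mem_filter, Finset.mem_univ, true_and]
  exact ⟨fun h => reach_eq hF hG hj₀ hFG hkx h, fun h => reach_eq hG hF hj₀ hFG.symm hkx h⟩

lemma immSucc_eq {A F G : Finset (V × V)} (hF : F ⊆ A) (hG : G ⊆ A) {k j₀ : V}
    (hj₀ : j₀ ∉ succS A k)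
    (hFG : F.filter (fun a => a.2 ≠ j₀) = G.filter (fun a => a.2 ≠ j₀)) :
    immSucc F k = immSucc G k := by
  have key : ∀ (F' G' : Finset (V × V)), F' ⊆ A → G' ⊆ A →
      F'.filter (fun a => a.2 ≠ j₀) = G'.filter (fun a => a.2 ≠ j₀) →
      ∀ y, (k, y) ∈ F' → (k, y) ∈ G' := by
    intro F' G' hF' hG' hFG' y hy
    have hyj : y ≠ j₀ := by
      rintro rfl
      apply hj₀
      rw [succS, Finset.mem_filter]
      exact ⟨Finset.mem_univ _, Relation.TransGen.single (hF' hy)⟩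
    have h1 : (k, y) ∈ F'.filter (fun a => a.2 ≠ j₀) := Finset.mem_filter.mpr ⟨hy, hyj⟩
    rw [hFG'] at h1
    exact (Finset.mem_filter.mp h1).1
  ext y
  simp only [immSucc, Finset.mem_filter, Finset.mem_univ, true_and]
  exact ⟨key F G hF hG hFG y, key G F hG hF hFG.symm y⟩

lemma marg_local {A F G : Finset (V × V)} (v : Finset V → ℝ) (hF : F ⊆ A) (hG : G ⊆ A)
    {k j₀ : V} (hj₀ : j₀ ∉ succS A k)
    (hFG : F.filter (fun a => a.2 ≠ j₀) = G.filter (fun a => a.2 ≠ j₀)) :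
    marg v F k = marg v G k := by
  rw [marg, marg, succSet_eq hF hG hj₀ hFG Relation.ReflTransGen.refl,
    immSucc_eq hF hG hj₀ hFG]
  congr 1
  apply Finset.sum_congr rfl
  intro j hj
  have hkj : (k, j) ∈ G := by
    simpa [immSucc] using hj
  rw [succSet_eq hF hG hj₀ hFG (Relation.ReflTransGen.single (hG hkj))]

lemma inDeg_zero_of_ne {G : Finset (V × V)} {j₀ : V} (hGne : ∀ a ∈ G, a.2 ≠ j₀) :
    inDeg G j₀ = 0 := by
  rw [inDeg, Finset.card_eq_zero, Finset.filter_eq_empty_iff]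
  exact hGne

lemma insert_mem_maxForests {X G : Finset (V × V)} (hX : CircuitFree X) {j₀ : V}
    (hGne : ∀ a ∈ G, a.2 ≠ j₀) (hGsub : G ⊆ X) (hGdeg : ∀ j, inDeg G j ≤ 1)
    (hGdeg2 : ∀ j, j ≠ j₀ → 1 ≤ inDeg X j → 1 ≤ inDeg G j)
    {e : V × V} (heX : e ∈ X) (he2 : e.2 = j₀) :
    insert e G ∈ maxForests X ∧ (insert e G).filter (fun a => a.2 ≠ j₀) = G := by
  have heG : e ∉ G := fun h => hGne e h he2
  constructor
  · rw [mem_maxForests_iff hX]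
    refine ⟨Finset.insert_subset heX hGsub, fun j => ?_⟩
    rw [inDeg_insert heG j, he2]
    rcases em (j = j₀) with rfl | hne
    · rw [if_pos rfl]
      have h0 := inDeg_zero_of_ne hGne
      exact ⟨by omega, fun _ => by omega⟩
    · rw [if_neg (fun h => hne h.symm)]
      exact ⟨by have := hGdeg j; omega, fun hXj => by have := hGdeg2 j hne hXj; omega⟩
  · rw [Finset.filter_insert, if_neg (by simp [he2]), Finset.filter_eq_self.mpr hGne]

lemma self_mem_maxForests {X G : Finset (V × V)} (hX : CircuitFree X) {j₀ : V}
    (hGne : ∀ a ∈ G, a.2 ≠ j₀) (hGsub : G ⊆ X) (hGdeg : ∀ j, inDeg G j ≤ 1)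
    (hGdeg2 : ∀ j, j ≠ j₀ → 1 ≤ inDeg X j → 1 ≤ inDeg G j)
    (h0 : inDeg X j₀ = 0) : G ∈ maxForests X := by
  rw [mem_maxForests_iff hX]
  refine ⟨hGsub, fun j => ⟨hGdeg j, fun hXj => ?_⟩⟩
  rcases em (j = j₀) with rfl | hne
  · omega
  · exact hGdeg2 j hne hXj

/-- properties of `ψ F` for a maximal forest `F` -/
lemma psi_props {X F : Finset (V × V)} (hX : CircuitFree X) (j₀ : V)
    (hF : F ∈ maxForests X) :
    (∀ a ∈ F.filter (fun a => a.2 ≠ j₀), a.2 ≠ j₀) ∧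
    F.filter (fun a => a.2 ≠ j₀) ⊆ X ∧
    (∀ j, inDeg (F.filter (fun a => a.2 ≠ j₀)) j ≤ 1) ∧
    (∀ j, j ≠ j₀ → 1 ≤ inDeg X j → 1 ≤ inDeg (F.filter (fun a => a.2 ≠ j₀)) j) := by
  have hMF := (mem_maxForests_iff hX).mp hF
  refine ⟨fun a ha => (Finset.mem_filter.mp ha).2,
    (Finset.filter_subset _ _).trans hMF.1, fun j => ?_, fun j hj hXj => ?_⟩
  · rw [inDeg_filter_ne]
    split_ifs
    · omega
    · exact (hMF.2 j).1
  · rw [inDeg_filter_ne, if_neg hj]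
    exact (hMF.2 j).2 hXj

lemma fiber_card {X : Finset (V × V)} (hX : CircuitFree X) (j₀ : V) {G : Finset (V × V)}
    (hG : G ∈ (maxForests X).image (fun F => F.filter (fun a => a.2 ≠ j₀))) :
    ((maxForests X).filter (fun F => F.filter (fun a => a.2 ≠ j₀) = G)).card
      = max (inDeg X j₀) 1 := by
  obtain ⟨F0, hF0, hG0⟩ := Finset.mem_image.mp hG
  obtain ⟨hGne, hGsub, hGdeg, hGdeg2⟩ := hG0 ▸ psi_props hX j₀ hF0
  rcases Nat.eq_zero_or_pos (inDeg X j₀) with h0 | hpos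
  · have hfib : (maxForests X).filter (fun F => F.filter (fun a => a.2 ≠ j₀) = G) = {G} := by
      ext F'
      simp only [Finset.mem_filter, Finset.mem_singleton]
      constructor
      · rintro ⟨hF', hfe⟩
        have hMF := (mem_maxForests_iff hX).mp hF'
        have hself : F'.filter (fun a => a.2 ≠ j₀) = F' := by
          rw [Finset.filter_eq_self]
          intro a haF' haj
          have h1 : 1 ≤ inDeg F' j₀ := inDeg_pos_iff.mpr ⟨a.1, by
            rw [← haj]; simpa using haF'⟩
          have h2 := inDeg_mono hMF.1 j₀
          omega
        exact (hself.symm.trans hfe)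
      · rintro rfl
        exact ⟨self_mem_maxForests hX hGne hGsub hGdeg hGdeg2 h0,
          Finset.filter_eq_self.mpr hGne⟩
    rw [hfib, Finset.card_singleton]
    omega
  · have himg : (maxForests X).filter (fun F => F.filter (fun a => a.2 ≠ j₀) = G)
        = (X.filter (fun a => a.2 = j₀)).image (fun e => insert e G) := by
      ext F'
      simp only [Finset.mem_filter, Finset.mem_image]
      constructor
      · rintro ⟨hF', hψ⟩
        have hMF := (mem_maxForests_iff hX).mp hF'
        have h1 : 1 ≤ inDeg F' j₀ := (hMF.2 j₀).2 hpos
        obtain ⟨x, hx⟩ := inDeg_pos_iff.mp h1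
        refine ⟨(x, j₀), ⟨hMF.1 hx, rfl⟩, ?_⟩
        ext a
        simp only [Finset.mem_insert]
        constructor
        · rintro (rfl | haG)
          · exact hx
          · rw [← hψ] at haG
            exact (Finset.mem_filter.mp haG).1
        · intro haF'
          rcases em (a.2 = j₀) with he | he
          · exact Or.inl (Finset.card_le_one.mp (hMF.2 j₀).1 a
              (Finset.mem_filter.mpr ⟨haF', he⟩) (x, j₀)
              (Finset.mem_filter.mpr ⟨hx, rfl⟩))
          · exact Or.inr (by rw [← hψ]; exact Finset.mem_filter.mpr ⟨haF', he⟩)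
      · rintro ⟨e, ⟨heX, he2⟩, rfl⟩
        exact insert_mem_maxForests hX hGne hGsub hGdeg hGdeg2 heX he2
    rw [himg, Finset.card_image_of_injOn, ← inDeg, Nat.max_eq_left hpos]
    intro e₁ h₁ e₂ h₂ hee
    simp only at hee
    have he₁ : e₁ ∉ G := fun h => hGne e₁ h (Finset.mem_filter.mp (Finset.mem_coe.mp h₁)).2
    have h3 : e₁ ∈ insert e₂ G := by rw [← hee]; exact Finset.mem_insert_self e₁ G
    rcases Finset.mem_insert.mp h3 with h | h
    · exact h
    · exact absurd h he₁

end Lemmas4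
section Lemmas5
set_option linter.unusedSectionVars false
set_option linter.unusedVariables false
variable {V : Type*} [Fintype V] [DecidableEq V]

lemma images_eq {A : Finset (V × V)} (hA : CircuitFree A) {i₀ j₀ : V} (ha : (i₀, j₀) ∈ A) :
    (maxForests A).image (fun F => F.filter (fun a => a.2 ≠ j₀))
      = (maxForests (A.erase (i₀, j₀))).image (fun F => F.filter (fun a => a.2 ≠ j₀)) := by
  have hsub : A.erase (i₀, j₀) ⊆ A := Finset.erase_subset _ _
  have hA₂ : CircuitFree (A.erase (i₀, j₀)) := circuitFree_subset hA hsub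
  have hdeg_eq : ∀ j, j ≠ j₀ → inDeg (A.erase (i₀, j₀)) j = inDeg A j := by
    intro j hj
    rw [inDeg_erase ha j, if_neg (fun h => hj h.symm)]
    omega
  ext G
  simp only [Finset.mem_image]
  constructor
  · rintro ⟨F, hF, rfl⟩
    obtain ⟨hGne, hGsub, hGdeg, hGdeg2⟩ := psi_props hA j₀ hF
    have hpsi : (F.filter (fun a => a.2 ≠ j₀)).filter (fun a => a.2 ≠ j₀)
        = F.filter (fun a => a.2 ≠ j₀) := Finset.filter_eq_self.mpr hGne
    have hGsub₂ : F.filter (fun a => a.2 ≠ j₀) ⊆ A.erase (i₀, j₀) := by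
      rw [Finset.subset_erase]
      exact ⟨hGsub, fun h => hGne _ h rfl⟩
    have hGdeg2₂ : ∀ j, j ≠ j₀ → 1 ≤ inDeg (A.erase (i₀, j₀)) j →
        1 ≤ inDeg (F.filter (fun a => a.2 ≠ j₀)) j := by
      intro j hj hXj
      exact hGdeg2 j hj (by rwa [hdeg_eq j hj] at hXj)
    rcases Nat.eq_zero_or_pos (inDeg (A.erase (i₀, j₀)) j₀) with h0 | hpos
    · exact ⟨_, self_mem_maxForests hA₂ hGne hGsub₂ hGdeg hGdeg2₂ h0, hpsi⟩
    · obtain ⟨x, hx⟩ := inDeg_pos_iff.mp hpos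
      obtain ⟨hmem, hpsi2⟩ := insert_mem_maxForests hA₂ hGne hGsub₂ hGdeg hGdeg2₂ hx rfl
      exact ⟨_, hmem, hpsi2⟩
  · rintro ⟨F, hF, rfl⟩
    obtain ⟨hGne, hGsub, hGdeg, hGdeg2⟩ := psi_props hA₂ j₀ hF
    have hGsubA : F.filter (fun a => a.2 ≠ j₀) ⊆ A := hGsub.trans hsub
    have hGdeg2A : ∀ j, j ≠ j₀ → 1 ≤ inDeg A j →
        1 ≤ inDeg (F.filter (fun a => a.2 ≠ j₀)) j := by
      intro j hj hXj
      exact hGdeg2 j hj (by rwa [← hdeg_eq j hj] at hXj)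
    obtain ⟨hmem, hpsi2⟩ := insert_mem_maxForests hA hGne hGsubA hGdeg hGdeg2A ha rfl
    exact ⟨_, hmem, hpsi2⟩

end Lemmas5

theorem AF_locality' {V : Type*} [Fintype V] [DecidableEq V]
    (A : Finset (V × V)) (hA : CircuitFree A) (v : Finset V → ℝ)
    (i₀ j₀ : V) (ha : (i₀, j₀) ∈ A) (k : V)
    (harcs : localArcs A k = localArcs (A.erase (i₀, j₀)) k) :
    AF v A k = AF v (A.erase (i₀, j₀)) k := by
  have hsub : A.erase (i₀, j₀) ⊆ A := Finset.erase_subset _ _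
  have hA₂ : CircuitFree (A.erase (i₀, j₀)) := circuitFree_subset hA hsub
  have hj₀ : j₀ ∉ succS A k := by
    intro hj
    have h1 : (i₀, j₀) ∈ localArcs A k := by
      rw [localArcs, Finset.mem_filter]
      exact ⟨ha, Or.inr hj⟩
    rw [harcs] at h1
    exact absurd (Finset.mem_filter.mp h1).1 (Finset.notMem_erase _ _)
  have hBeq : (maxForests (A.erase (i₀, j₀))).image (fun F => F.filter (fun a => a.2 ≠ j₀))
      = (maxForests A).image (fun F => F.filter (fun a => a.2 ≠ j₀)) :=
    (images_eq hA ha).symm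
  set B := (maxForests A).image (fun F => F.filter (fun a => a.2 ≠ j₀)) with hB
  have hkey : ∀ (X : Finset (V × V)), X ⊆ A → CircuitFree X →
      ∀ G, ∀ F ∈ (maxForests X).filter (fun F => F.filter (fun a => a.2 ≠ j₀) = G),
      marg v F k = marg v (insert (i₀, j₀) G) k := by
    intro X hXA hXcf G F hFmem
    obtain ⟨hFX, hψF⟩ := Finset.mem_filter.mp hFmem
    have hFsubA : F ⊆ A := ((mem_maxForests_iff hXcf).mp hFX).1.trans hXA
    have hGne : ∀ a ∈ G, a.2 ≠ j₀ := by
      rw [← hψF]; exact fun a haa => (Finset.mem_filter.mp haa).2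
    have hGsubA : G ⊆ A := by
      rw [← hψF]; exact (Finset.filter_subset _ _).trans hFsubA
    apply marg_local v hFsubA (Finset.insert_subset ha hGsubA) hj₀
    rw [hψF, Finset.filter_insert, if_neg (by simp), Finset.filter_eq_self.mpr hGne]
  have hsum : ∀ (X : Finset (V × V)), X ⊆ A → CircuitFree X →
      (maxForests X).image (fun F => F.filter (fun a => a.2 ≠ j₀)) = B →
      (∑ F ∈ maxForests X, marg v F k)
          = ((max (inDeg X j₀) 1 : ℕ) : ℝ) * (∑ G ∈ B, marg v (insert (i₀, j₀) G) k) ∧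
        ((maxForests X).card : ℝ) = ((max (inDeg X j₀) 1 : ℕ) : ℝ) * (B.card : ℝ) := by
    intro X hXA hXcf hBX
    have hmaps : ∀ F ∈ maxForests X, F.filter (fun a => a.2 ≠ j₀) ∈ B := by
      intro F hF
      rw [← hBX]
      exact Finset.mem_image_of_mem _ hF
    constructor
    · rw [← Finset.sum_fiberwise_of_maps_to hmaps (fun F => marg v F k), Finset.mul_sum]
      apply Finset.sum_congr rfl
      intro G hG
      have hG' : G ∈ (maxForests X).image (fun F => F.filter (fun a => a.2 ≠ j₀)) := by
        rw [hBX]; exact hG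
      rw [Finset.sum_congr rfl (fun F hF => hkey X hXA hXcf G F hF),
        Finset.sum_const, fiber_card hXcf j₀ hG', nsmul_eq_mul]
    · rw [Finset.card_eq_sum_card_fiberwise hmaps]
      push_cast
      rw [Finset.sum_congr rfl (fun G hG => by
        rw [fiber_card hXcf j₀ (by rw [hBX]; exact hG)]), Finset.sum_const,
        nsmul_eq_mul, mul_comm]
      push_cast
      ring
  obtain ⟨hs1, hc1⟩ := hsum A (subset_refl A) hA hB.symm
  obtain ⟨hs2, hc2⟩ := hsum (A.erase (i₀, j₀)) hsub hA₂ hBeq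
  have hpos1 : ((max (inDeg A j₀) 1 : ℕ) : ℝ) ≠ 0 := by
    have : 1 ≤ max (inDeg A j₀) 1 := le_max_right _ _
    exact_mod_cast by omega
  have hpos2 : ((max (inDeg (A.erase (i₀, j₀)) j₀) 1 : ℕ) : ℝ) ≠ 0 := by
    have : 1 ≤ max (inDeg (A.erase (i₀, j₀)) j₀) 1 := le_max_right _ _
    exact_mod_cast by omega
  rw [AF, AF, hs1, hc1, hs2, hc2, mul_div_mul_left _ _ hpos1, mul_div_mul_left _ _ hpos2]

/-- locality of the Average Forest measure: if removing the arc `(i₀, j₀)`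
does not change the local digraph of `k`, then the AF value of `k` is unchanged. -/
theorem AF_locality {V : Type*} [Fintype V] [DecidableEq V]
    (A : Finset (V × V)) (hA : CircuitFree A) (v : Finset V → ℝ)
    (i₀ j₀ : V) (ha : (i₀, j₀) ∈ A) (k : V)
    (hnodes : localNodes A k = localNodes (A.erase (i₀, j₀)) k)
    (harcs : localArcs A k = localArcs (A.erase (i₀, j₀)) k) :
    AF v A k = AF v (A.erase (i₀, j₀)) k := by
  exact AF_locality' A hA v i₀ j₀ ha k harcs
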